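/- For every n ≥ 1 the following identities hold in Mat₂(q): (i) Z22·Z11^n = Z11^n·Z22 + (1 − q^{−n})·Z21·Z12·Z11^{n−1}, and (ii) Z11·Z22^n = Z22^n·Z11 + (1 − q^{n})·Z12·Z21·Z22^{n−1}. -/

import Mathlib

noncomputable section

open FreeAlgebra MulOpposite

/-- The relations of the Dipper–Donkin quantized matrix algebra of rank 2:
`Z12·Z11 = Z11·Z12`, `Z21·Z11 = q·Z11·Z21`, `Z22·Z21 = Z21·Z22`, `Z22·Z12 = q·Z12·Z22`,
`Z21·Z12 = q·Z12·Z21`, `Z22·Z11 = Z11·Z22 + (q−1)·Z12·Z21`, where the generators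
`Z11, Z12, Z21, Z22` are the images of `0, 1, 2, 3 : Fin 4`. -/
inductive DDrel {K : Type*} [Field K] (q : K) :
    FreeAlgebra K (Fin 4) → FreeAlgebra K (Fin 4) → Prop
  | r1 : DDrel q (ι K (1 : Fin 4) * ι K (0 : Fin 4)) (ι K (0 : Fin 4) * ι K (1 : Fin 4))
  | r2 : DDrel q (ι K (2 : Fin 4) * ι K (0 : Fin 4)) (q • (ι K (0 : Fin 4) * ι K (2 : Fin 4)))
  | r3 : DDrel q (ι K (3 : Fin 4) * ι K (2 : Fin 4)) (ι K (2 : Fin 4) * ι K (3 : Fin 4))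
  | r4 : DDrel q (ι K (3 : Fin 4) * ι K (1 : Fin 4)) (q • (ι K (1 : Fin 4) * ι K (3 : Fin 4)))
  | r5 : DDrel q (ι K (2 : Fin 4) * ι K (1 : Fin 4)) (q • (ι K (1 : Fin 4) * ι K (2 : Fin 4)))
  | r6 : DDrel q (ι K (3 : Fin 4) * ι K (0 : Fin 4))
      (ι K (0 : Fin 4) * ι K (3 : Fin 4) + (q - 1) • (ι K (1 : Fin 4) * ι K (2 : Fin 4)))

/-- The Dipper–Donkin quantized matrix algebra `Mat₂(q)`: the quotient of the free
`K`-algebra on four generators by the two-sided ideal generated by the relations above. -/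
abbrev DDMat2 {K : Type*} [Field K] (q : K) := RingQuot (DDrel q)

variable {K : Type*} [Field K]

/-- The generator `Z11` of `Mat₂(q)`. -/
def Z11 (q : K) : DDMat2 q := RingQuot.mkAlgHom K (DDrel q) (ι K (0 : Fin 4))
/-- The generator `Z12` of `Mat₂(q)`. -/
def Z12 (q : K) : DDMat2 q := RingQuot.mkAlgHom K (DDrel q) (ι K (1 : Fin 4))
/-- The generator `Z21` of `Mat₂(q)`. -/
def Z21 (q : K) : DDMat2 q := RingQuot.mkAlgHom K (DDrel q) (ι K (2 : Fin 4))
/-- The generator `Z22` of `Mat₂(q)`. -/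
def Z22 (q : K) : DDMat2 q := RingQuot.mkAlgHom K (DDrel q) (ι K (3 : Fin 4))

section Aux
variable (q : K)

lemma DD_h1 : Z12 q * Z11 q = Z11 q * Z12 q := by
  simpa [Z11, Z12, map_mul] using RingQuot.mkAlgHom_rel K (DDrel.r1 (q := q))

lemma DD_h2 : Z21 q * Z11 q = q • (Z11 q * Z21 q) := by
  simpa [Z11, Z21, map_mul, map_smul] using RingQuot.mkAlgHom_rel K (DDrel.r2 (q := q))

lemma DD_h3 : Z22 q * Z21 q = Z21 q * Z22 q := by
  simpa [Z21, Z22, map_mul] using RingQuot.mkAlgHom_rel K (DDrel.r3 (q := q))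

lemma DD_h4 : Z22 q * Z12 q = q • (Z12 q * Z22 q) := by
  simpa [Z12, Z22, map_mul, map_smul] using RingQuot.mkAlgHom_rel K (DDrel.r4 (q := q))

lemma DD_h5 : Z21 q * Z12 q = q • (Z12 q * Z21 q) := by
  simpa [Z12, Z21, map_mul, map_smul] using RingQuot.mkAlgHom_rel K (DDrel.r5 (q := q))

lemma DD_h6 : Z22 q * Z11 q = Z11 q * Z22 q + (q - 1) • (Z12 q * Z21 q) := by
  simpa [Z11, Z12, Z21, Z22, map_mul, map_add, map_smul] using
    RingQuot.mkAlgHom_rel K (DDrel.r6 (q := q))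

lemma DD_p1 (n : ℕ) : Z12 q * Z11 q ^ n = Z11 q ^ n * Z12 q := by
  induction n with
  | zero => simp
  | succ n ih =>
    rw [pow_succ, ← mul_assoc, ih, mul_assoc, DD_h1, ← mul_assoc, mul_assoc]

lemma DD_p2 (n : ℕ) : Z21 q * Z11 q ^ n = q ^ n • (Z11 q ^ n * Z21 q) := by
  induction n with
  | zero => simp
  | succ n ih =>
    rw [pow_succ', ← mul_assoc, DD_h2, smul_mul_assoc, mul_assoc, ih, mul_smul_comm,
      smul_smul, ← mul_assoc, ← pow_succ', pow_succ']

lemma DD_p3 (n : ℕ) : Z21 q * Z22 q ^ n = Z22 q ^ n * Z21 q := by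
  induction n with
  | zero => simp
  | succ n ih =>
    rw [pow_succ, ← mul_assoc, ih, mul_assoc, ← DD_h3, ← mul_assoc, mul_assoc]

lemma DD_p4 (n : ℕ) : Z22 q ^ n * Z12 q = q ^ n • (Z12 q * Z22 q ^ n) := by
  induction n with
  | zero => simp
  | succ n ih =>
    rw [pow_succ, mul_assoc, DD_h4, mul_smul_comm, ← mul_assoc, ih, smul_mul_assoc,
      smul_smul, mul_assoc, ← pow_succ']

lemma DD_key1 (n : ℕ) :
    Z21 q * Z12 q * Z11 q ^ n = q ^ (n + 1) • (Z11 q ^ n * (Z12 q * Z21 q)) := by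
  rw [mul_assoc, DD_p1, ← mul_assoc, DD_p2, smul_mul_assoc, mul_assoc, DD_h5,
    mul_smul_comm, smul_smul, ← pow_succ]

lemma DD_key1' (hq : q ≠ 0) (n : ℕ) :
    Z11 q ^ n * (Z12 q * Z21 q) = (q⁻¹ ^ (n + 1)) • (Z21 q * Z12 q * Z11 q ^ n) := by
  rw [DD_key1, smul_smul, ← mul_pow, inv_mul_cancel₀ hq, one_pow, one_smul]

lemma DD_key2 (n : ℕ) :
    Z22 q ^ n * (Z12 q * Z21 q) = q ^ n • (Z12 q * Z21 q * Z22 q ^ n) := by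
  rw [← mul_assoc, DD_p4, smul_mul_assoc, mul_assoc, ← DD_p3, ← mul_assoc]

end Aux

/-- For every `n ≥ 1` the following identities hold in `Mat₂(q)`:
(i) `Z22·Z11^n = Z11^n·Z22 + (1 − q^{−n})·Z21·Z12·Z11^{n−1}`, and
(ii) `Z11·Z22^n = Z22^n·Z11 + (1 − q^{n})·Z12·Z21·Z22^{n−1}`. -/
theorem DDMat2_commutation_identities (q : K) (hq : q ≠ 0) (n : ℕ) (hn : 1 ≤ n) :
    Z22 q * Z11 q ^ n =
      Z11 q ^ n * Z22 q + (1 - q⁻¹ ^ n) • (Z21 q * Z12 q * Z11 q ^ (n - 1)) ∧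
    Z11 q * Z22 q ^ n =
      Z22 q ^ n * Z11 q + (1 - q ^ n) • (Z12 q * Z21 q * Z22 q ^ (n - 1)) := by
  induction n, hn using Nat.le_induction with
  | base =>
    constructor
    · simp only [pow_one, Nat.sub_self, pow_zero, mul_one]
      rw [DD_h6, DD_h5]
      match_scalars <;> field_simp
    · simp only [pow_one, Nat.sub_self, pow_zero, mul_one]
      have h : Z11 q * Z22 q = Z22 q * Z11 q + (1 - q) • (Z12 q * Z21 q) := by
        rw [DD_h6]; module
      rw [h]
  | succ n hn ih =>
    obtain ⟨ih1, ih2⟩ := ih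
    have hsub : n - 1 + 1 = n := Nat.succ_pred_eq_of_pos hn
    constructor
    · rw [pow_succ, ← mul_assoc, ih1, add_mul, smul_mul_assoc, mul_assoc, DD_h6,
        mul_assoc (Z21 q * Z12 q), ← pow_succ, hsub, mul_add, ← mul_assoc, ← pow_succ,
        mul_smul_comm, DD_key1' q hq, Nat.add_sub_cancel]
      match_scalars
      · ring
      · field_simp
        ring_nf; rw [mul_inv_cancel₀ hq]; ring
    · rw [pow_succ, ← mul_assoc, ih2, add_mul, smul_mul_assoc, mul_assoc (Z22 q ^ n),
        mul_assoc (Z12 q * Z21 q), ← pow_succ, hsub, Nat.add_sub_cancel]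
      have h : Z11 q * Z22 q = Z22 q * Z11 q + (1 - q) • (Z12 q * Z21 q) := by
        rw [DD_h6]; module
      rw [h, mul_add, ← mul_assoc, ← pow_succ, mul_smul_comm, DD_key2]
      match_scalars <;> ring
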